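/- arXiv:2403.00168 — 3 statements merged into one kernel-verified Lean document; each statement's English description precedes it below -/
import Mathlib

section
/- Let α > 1 and let X be a positive random variable. If there exists C > 0 such that for all sufficiently large x, P(X ≥ x) ≤ exp(−(1/C) log^α(1+x)), then there exists C' > 0 such that for all sufficiently large p, E[X^p] ≤ exp(C' p^(α/(α−1))). -/
open MeasureTheory Real Filter Set

/-- If `P(X ≥ x) ≤ exp(-(1/C) log^α(1+x))` for all large `x` (some `C > 0`),
then there is `C' > 0` such that `E[X^p] ≤ exp(C' p^(α/(α-1)))` for all large `p`. -/
theorem moment_bound_of_tail_bound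
    {Ω : Type*} [MeasurableSpace Ω] (μ : Measure Ω) [IsProbabilityMeasure μ]
    (α : ℝ) (hα : 1 < α) (X : Ω → ℝ) (hX : Measurable X) (hXpos : ∀ ω, 0 ≤ X ω)
    (h : ∃ C > 0, ∀ᶠ x : ℝ in atTop,
      μ {ω | x ≤ X ω} ≤ ENNReal.ofReal (Real.exp (-(1 / C) * (Real.log (1 + x)) ^ α))) :
    ∃ C > 0, ∀ᶠ p : ℝ in atTop,
      ∫⁻ ω, ENNReal.ofReal (X ω ^ p) ∂μ
        ≤ ENNReal.ofReal (Real.exp (C * p ^ (α / (α - 1)))) := by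
  obtain ⟨C, hC, htail⟩ := h
  have hαpos : (0:ℝ) < α := lt_trans one_pos hα
  set β := α / (α - 1) with hβdef
  have hconj : α.HolderConjugate β := Real.HolderConjugate.conjExponent hα
  have hβpos : 0 < β := hconj.symm.pos
  set lam : ℝ := (α / (2*C)) ^ (1/α) with hlam
  have hlam_pos : 0 < lam := Real.rpow_pos_of_pos (by positivity) _
  have hlam_pow : lam ^ α = α / (2*C) := by
    rw [hlam, ← Real.rpow_mul (by positivity), one_div, inv_mul_cancel₀ hαpos.ne',
      Real.rpow_one]
  set K : ℝ := (1/lam) ^ β / β with hK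
  have hKpos : 0 < K := by positivity
  set Y : Ω → ℝ := fun ω => Real.exp ((1/(2*C)) * (Real.log (1 + X ω)) ^ α) with hY
  have hYm : Measurable Y := by
    apply Measurable.exp
    exact (((Real.continuous_rpow_const hαpos.le).measurable.comp
      ((hX.const_add 1).log)).const_mul _)
  have hY1 : ∀ ω, 1 ≤ Y ω := by
    intro ω
    have h0 : 0 ≤ Real.log (1 + X ω) := Real.log_nonneg (by linarith [hXpos ω])
    have h1 : 0 ≤ (1/(2*C)) * (Real.log (1 + X ω)) ^ α := by positivity
    exact Real.one_le_exp h1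
  -- pointwise key inequality
  have key : ∀ (p : ℝ), 0 ≤ p → ∀ ω, X ω ^ p ≤ Real.exp (K * p ^ β) * Y ω := by
    intro p hp ω
    set L := Real.log (1 + X ω) with hL
    have hLnn : 0 ≤ L := Real.log_nonneg (by linarith [hXpos ω])
    have h1 : X ω ^ p ≤ (1 + X ω) ^ p :=
      Real.rpow_le_rpow (hXpos ω) (by linarith [hXpos ω]) hp
    have h2 : (1 + X ω) ^ p = Real.exp (p * L) := by
      rw [Real.rpow_def_of_pos (by linarith [hXpos ω]), mul_comm]
    have hyoung : (lam * L) * (p / lam) ≤ (lam*L)^α/α + (p/lam)^β/β :=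
      Real.young_inequality_of_nonneg (by positivity) (by positivity) hconj
    have heq1 : (lam * L) * (p / lam) = p * L := by
      field_simp
    have heq2 : (lam*L)^α/α = (1/(2*C)) * L^α := by
      rw [Real.mul_rpow hlam_pos.le hLnn, hlam_pow]
      field_simp
    have heq3 : (p/lam)^β/β = K * p^β := by
      rw [div_eq_mul_inv p lam, ← one_div, Real.mul_rpow hp (by positivity), hK]
      ring
    have hsum : p * L ≤ K * p^β + (1/(2*C)) * L^α := by
      rw [← heq1]
      rw [heq2, heq3] at hyoung
      linarith
    calc X ω ^ p ≤ Real.exp (p * L) := h2 ▸ h1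
      _ ≤ Real.exp (K * p^β + (1/(2*C)) * L^α) := Real.exp_le_exp.2 hsum
      _ = Real.exp (K * p^β) * Y ω := by rw [Real.exp_add]
  -- finiteness of the integral of Y
  have hJ : ∫⁻ ω, ENNReal.ofReal (Y ω) ∂μ < ⊤ := by
    rw [lintegral_eq_lintegral_meas_lt μ
      (Filter.Eventually.of_forall fun ω => zero_le_one.trans (hY1 ω)) hYm.aemeasurable]
    obtain ⟨x₀, hx₀⟩ := eventually_atTop.1 htail
    have hxt : Tendsto (fun t : ℝ => Real.exp ((2*C*Real.log t) ^ (1/α)) - 1) atTop atTop := by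
      have h1 : Tendsto (fun t : ℝ => 2*C*Real.log t) atTop atTop :=
        (Real.tendsto_log_atTop).const_mul_atTop (by positivity)
      have h2 : Tendsto (fun t : ℝ => (2*C*Real.log t) ^ (1/α)) atTop atTop :=
        (tendsto_rpow_atTop (by positivity)).comp h1
      have h3 : Tendsto (fun t : ℝ => Real.exp ((2*C*Real.log t) ^ (1/α))) atTop atTop :=
        Real.tendsto_exp_atTop.comp h2
      simpa [sub_eq_add_neg] using tendsto_atTop_add_const_right atTop (-1) h3
    obtain ⟨T, hT⟩ := eventually_atTop.1 ((hxt.eventually_ge_atTop x₀).and (eventually_gt_atTop 1))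
    have hT0 : (0:ℝ) < max T 1 := lt_of_lt_of_le one_pos (le_max_right _ _)
    have tailY : ∀ t : ℝ, max T 1 < t → μ {a | t < Y a} ≤ ENNReal.ofReal (t ^ (-2:ℝ)) := by
      intro t ht
      have hTt : T ≤ t := le_of_lt (lt_of_le_of_lt (le_max_left _ _) ht)
      obtain ⟨hxge, ht1⟩ := hT t hTt
      have ht1' : (1:ℝ) < t := lt_of_le_of_lt (le_max_right _ _) ht
      have hlogt : 0 < Real.log t := Real.log_pos ht1'
      set s : ℝ := 2*C*Real.log t with hs
      have hs0 : 0 < s := by positivity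
      set x : ℝ := Real.exp (s ^ (1/α)) - 1 with hx
      have hsub : {a | t < Y a} ⊆ {ω | x ≤ X ω} := by
        intro ω hω
        simp only [Set.mem_setOf_eq] at hω ⊢
        set L := Real.log (1 + X ω) with hL
        have hLnn : 0 ≤ L := Real.log_nonneg (by linarith [hXpos ω])
        have h1 : Real.log t < (1/(2*C)) * L ^ α := by
          have := Real.log_lt_log (lt_trans zero_lt_one ht1') hω
          rwa [Real.log_exp] at this
        have h2 : s < L ^ α := by
          rw [hs]
          have h2C : (0:ℝ) < 2*C := by positivity
          calc 2*C*Real.log t < 2*C*((1/(2*C)) * L ^ α) := by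
                exact (mul_lt_mul_iff_right₀ h2C).2 h1
            _ = L ^ α := by field_simp
        have h3 : s ^ (1/α) < L := by
          have := Real.rpow_lt_rpow hs0.le h2 (by positivity : (0:ℝ) < 1/α)
          rwa [← Real.rpow_mul hLnn, mul_one_div, div_self hαpos.ne', Real.rpow_one] at this
        have h4 : Real.exp (s ^ (1/α)) < 1 + X ω := by
          calc Real.exp (s ^ (1/α)) < Real.exp L := Real.exp_lt_exp.2 h3
            _ = 1 + X ω := by rw [hL, Real.exp_log (by linarith [hXpos ω])]
        rw [hx]; linarith
      have hbound := hx₀ x hxge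
      have hlog1x : Real.log (1 + x) = s ^ (1/α) := by
        rw [hx]
        have : 1 + (Real.exp (s ^ (1/α)) - 1) = Real.exp (s ^ (1/α)) := by ring
        rw [this, Real.log_exp]
      have hval : -(1/C) * (Real.log (1 + x)) ^ α = -2 * Real.log t := by
        rw [hlog1x, ← Real.rpow_mul hs0.le, one_div_mul_cancel hαpos.ne',
          Real.rpow_one, hs]
        field_simp
      calc μ {a | t < Y a} ≤ μ {ω | x ≤ X ω} := measure_mono hsub
        _ ≤ ENNReal.ofReal (Real.exp (-(1/C) * (Real.log (1 + x)) ^ α)) := hbound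
        _ = ENNReal.ofReal (t ^ (-2:ℝ)) := by
            rw [hval, Real.rpow_def_of_pos (lt_trans zero_lt_one ht1'), mul_comm]
    -- split the integral
    rw [← Set.Ioc_union_Ioi_eq_Ioi hT0.le]
    refine lt_of_le_of_lt (lintegral_union_le _ _ _) ?_
    have part1 : ∫⁻ t in Set.Ioc 0 (max T 1), μ {a | t < Y a} < ⊤ := by
      calc ∫⁻ t in Set.Ioc 0 (max T 1), μ {a | t < Y a}
          ≤ ∫⁻ _ in Set.Ioc 0 (max T 1), 1 := lintegral_mono fun t => prob_le_one
        _ = volume (Set.Ioc 0 (max T 1)) := by simp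
        _ < ⊤ := measure_Ioc_lt_top
    have part2 : ∫⁻ t in Set.Ioi (max T 1), μ {a | t < Y a} < ⊤ := by
      have hle : ∫⁻ t in Set.Ioi (max T 1), μ {a | t < Y a}
          ≤ ∫⁻ t in Set.Ioi (max T 1), ENNReal.ofReal (t ^ (-2:ℝ)) := by
        refine setLIntegral_mono' measurableSet_Ioi fun t ht => tailY t ht
      refine lt_of_le_of_lt hle ?_
      have hint : IntegrableOn (fun t : ℝ => t ^ (-2:ℝ)) (Set.Ioi (max T 1)) :=
        integrableOn_Ioi_rpow_of_lt (by norm_num) hT0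
      have := hint.hasFiniteIntegral
      refine lt_of_le_of_lt (lintegral_mono fun t => Real.ofReal_le_enorm _) this
    exact ENNReal.add_lt_top.2 ⟨part1, part2⟩
  -- conclusion
  refine ⟨K + 1, by positivity, ?_⟩
  have hexp : Tendsto (fun p : ℝ => Real.exp (p ^ β)) atTop atTop :=
    Real.tendsto_exp_atTop.comp (tendsto_rpow_atTop hβpos)
  filter_upwards [eventually_ge_atTop (0:ℝ),
    hexp.eventually_ge_atTop ((∫⁻ ω, ENNReal.ofReal (Y ω) ∂μ).toReal)] with p hp hp2
  have hJle : ∫⁻ ω, ENNReal.ofReal (Y ω) ∂μ ≤ ENNReal.ofReal (Real.exp (p ^ β)) := by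
    rw [← ENNReal.ofReal_toReal hJ.ne]
    exact ENNReal.ofReal_le_ofReal hp2
  calc ∫⁻ ω, ENNReal.ofReal (X ω ^ p) ∂μ
      ≤ ∫⁻ ω, ENNReal.ofReal (Real.exp (K * p ^ β) * Y ω) ∂μ :=
        lintegral_mono fun ω => ENNReal.ofReal_le_ofReal (key p hp ω)
    _ = ENNReal.ofReal (Real.exp (K * p ^ β)) * ∫⁻ ω, ENNReal.ofReal (Y ω) ∂μ := by
        simp_rw [ENNReal.ofReal_mul (Real.exp_nonneg _)]
        exact lintegral_const_mul' _ _ ENNReal.ofReal_ne_top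
    _ ≤ ENNReal.ofReal (Real.exp (K * p ^ β)) * ENNReal.ofReal (Real.exp (p ^ β)) :=
        mul_le_mul_right hJle _
    _ = ENNReal.ofReal (Real.exp ((K + 1) * p ^ β)) := by
        rw [← ENNReal.ofReal_mul (Real.exp_nonneg _), ← Real.exp_add]
        ring_nf
end

section
/- Let α > 1 and let X be a positive random variable. If there exists C > 0 such that for all sufficiently large p, E[X^p] ≤ exp(C p^(α/(α−1))), then there exists C' > 0 such that E[exp((1/C') log^α(1+X))] < ∞. -/
open MeasureTheory Real Filter

/-- If `E[X^p] ≤ exp(C p^(α/(α-1)))` for all large `p` (some `C > 0`),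
then there is `C' > 0` such that `E[exp((1/C') log^α(1+X))] < ∞`. -/
theorem exp_log_moment_of_moment_bound
    {Ω : Type*} [MeasurableSpace Ω] (μ : Measure Ω) [IsProbabilityMeasure μ]
    (α : ℝ) (hα : 1 < α) (X : Ω → ℝ) (hX : Measurable X) (hXpos : ∀ ω, 0 ≤ X ω)
    (h : ∃ C > 0, ∀ᶠ p : ℝ in atTop,
      ∫⁻ ω, ENNReal.ofReal (X ω ^ p) ∂μ
        ≤ ENNReal.ofReal (Real.exp (C * p ^ (α / (α - 1))))) :
    ∃ C > 0,
      ∫⁻ ω, ENNReal.ofReal (Real.exp ((1 / C) * (Real.log (1 + X ω)) ^ α)) ∂μ < ⊤ := by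
  obtain ⟨C, hC, hev⟩ := h
  rw [eventually_atTop] at hev
  obtain ⟨p₀, hp₀⟩ := hev
  have hα1 : (0:ℝ) < α - 1 := sub_pos.2 hα
  have hα0 : (0:ℝ) < α := lt_trans one_pos hα
  set β : ℝ := α / (α - 1) with hβ
  have hβ1 : β - 1 = 1 / (α - 1) := by rw [hβ]; field_simp; ring
  have hαβ : (α - 1) * β = α := by rw [hβ]; field_simp
  -- choose c
  set c : ℝ := min 1 (((4 * C)⁻¹) ^ (α - 1)) with hcdef
  have hc : 0 < c := by
    apply lt_min one_pos
    apply Real.rpow_pos_of_pos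
    positivity
  have hkey : C * c ^ β ≤ c / 4 := by
    have h1 : c ^ (1:ℝ) * c ^ (β - 1) = c ^ β := by
      rw [← Real.rpow_add hc]; norm_num
    have h1' : c ^ β = c * c ^ (1 / (α - 1)) := by
      rw [← h1, Real.rpow_one, hβ1]
    have h2 : c ^ (1 / (α - 1)) ≤ (4 * C)⁻¹ := by
      have hle : c ^ (1 / (α - 1)) ≤ ((((4 * C)⁻¹) ^ (α - 1)) : ℝ) ^ (1 / (α - 1)) :=
        Real.rpow_le_rpow hc.le (min_le_right _ _) (by positivity)
      rwa [← Real.rpow_mul (by positivity), mul_one_div, div_self hα1.ne', Real.rpow_one] at hle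
    calc C * c ^ β = c * (C * c ^ (1 / (α - 1))) := by rw [h1']; ring
    _ ≤ c * (C * (4 * C)⁻¹) := by
        apply mul_le_mul_of_nonneg_left _ hc.le
        exact mul_le_mul_of_nonneg_left h2 hC.le
    _ = c / 4 := by field_simp
  -- choose t
  set t : ℝ := c / (8 * 2 ^ α) with htdef
  have h2α : (0:ℝ) < 2 ^ α := Real.rpow_pos_of_pos two_pos α
  have ht : 0 < t := by positivity
  -- L and the partition
  set L : Ω → ℝ := fun ω => Real.log (1 + X ω) with hLdef
  have hL : Measurable L := (measurable_const.add hX).log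
  have hL0 : ∀ ω, 0 ≤ L ω := fun ω => Real.log_nonneg (by linarith [hXpos ω])
  set A : ℕ → Set Ω := fun n => L ⁻¹' (Set.Ico (n : ℝ) (n + 1)) with hAdef
  have hAm : ∀ n, MeasurableSet (A n) := fun n => hL measurableSet_Ico
  have hdisj : Pairwise (Function.onFun Disjoint A) := by
    intro i j hij
    simp only [Function.onFun, Set.disjoint_left, hAdef, Set.mem_preimage, Set.mem_Ico]
    rintro ω ⟨h1, h2⟩ ⟨h3, h4⟩
    have hij1 : (i : ℝ) < (j : ℝ) + 1 := lt_of_le_of_lt h1 h4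
    have hij2 : (j : ℝ) < (i : ℝ) + 1 := lt_of_le_of_lt h3 h2
    have e1 : i < j + 1 := by exact_mod_cast hij1
    have e2 : j < i + 1 := by exact_mod_cast hij2
    omega
  have hcover : (⋃ n, A n) = Set.univ := by
    ext ω
    simp only [Set.mem_iUnion, Set.mem_univ, iff_true, hAdef, Set.mem_preimage, Set.mem_Ico]
    exact ⟨⌊L ω⌋₊, Nat.floor_le (hL0 ω), Nat.lt_floor_add_one _⟩
  -- choose N
  have htends : Tendsto (fun n : ℕ => c * (n : ℝ) ^ (α - 1)) atTop atTop := by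
    apply Tendsto.const_mul_atTop hc
    exact (tendsto_rpow_atTop hα1).comp tendsto_natCast_atTop_atTop
  obtain ⟨N₀, hN₀⟩ := (htends.eventually_ge_atTop p₀).exists_forall_of_atTop
  set N : ℕ := max N₀ 2 with hNdef
  have hN2 : 2 ≤ N := le_max_right _ _
  -- tail measure bound
  have hmeas_bound : ∀ n : ℕ, N ≤ n →
      μ (A n) ≤ ENNReal.ofReal (Real.exp (-(c / 4) * (n : ℝ) ^ α)) := by
    intro n hn
    have hn2 : 2 ≤ n := le_trans hN2 hn
    have hn1 : (1:ℝ) ≤ (n : ℝ) := by exact_mod_cast le_trans one_le_two hn2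
    have hnpos : (0:ℝ) < n := lt_of_lt_of_le one_pos hn1
    set p : ℝ := c * (n : ℝ) ^ (α - 1) with hpdef
    have hp : 0 < p := by positivity
    have hpp₀ : p₀ ≤ p := hN₀ n (le_trans (le_max_left _ _) hn)
    set a : ℝ := Real.exp (n : ℝ) - 1 with hadef
    have hexphalf : (2:ℝ) ≤ Real.exp ((n : ℝ) / 2) := by
      have h1 : (1:ℝ) ≤ (n : ℝ) / 2 := by
        linarith [show (2:ℝ) ≤ (n:ℝ) from by exact_mod_cast hn2]
      calc (2:ℝ) ≤ Real.exp 1 := by linarith [Real.add_one_le_exp (1:ℝ)]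
      _ ≤ Real.exp ((n : ℝ) / 2) := Real.exp_le_exp.2 h1
    have ha_ge : Real.exp ((n : ℝ) / 2) ≤ a := by
      have hsq : Real.exp (n : ℝ) = Real.exp ((n : ℝ) / 2) * Real.exp ((n : ℝ) / 2) := by
        rw [← Real.exp_add]; ring_nf
      nlinarith [Real.exp_pos ((n : ℝ) / 2)]
    have ha : 0 < a := lt_of_lt_of_le (Real.exp_pos _) ha_ge
    have hloga : (n : ℝ) / 2 ≤ Real.log a := by
      rw [Real.le_log_iff_exp_le ha]; exact ha_ge
    -- Markov
    have hsub : A n ⊆ {ω | ENNReal.ofReal (a ^ p) ≤ ENNReal.ofReal (X ω ^ p)} := by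
      intro ω hω
      simp only [hAdef, Set.mem_preimage, Set.mem_Ico] at hω
      have hXa : a ≤ X ω := by
        have h1X : (0:ℝ) < 1 + X ω := by linarith [hXpos ω]
        have hle : Real.exp (n : ℝ) ≤ 1 + X ω := by
          calc Real.exp (n : ℝ) ≤ Real.exp (L ω) := Real.exp_le_exp.2 hω.1
          _ = 1 + X ω := by rw [hLdef]; exact Real.exp_log h1X
        simp only [hadef]; linarith
      exact ENNReal.ofReal_le_ofReal (Real.rpow_le_rpow ha.le hXa hp.le)
    have hmarkov : ENNReal.ofReal (a ^ p) * μ (A n)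
        ≤ ENNReal.ofReal (Real.exp (C * p ^ β)) := by
      calc ENNReal.ofReal (a ^ p) * μ (A n)
          ≤ ENNReal.ofReal (a ^ p) * μ {ω | ENNReal.ofReal (a ^ p) ≤ ENNReal.ofReal (X ω ^ p)} :=
            mul_le_mul_right (measure_mono hsub) _
        _ ≤ ∫⁻ ω, ENNReal.ofReal (X ω ^ p) ∂μ :=
            mul_meas_ge_le_lintegral₀ (by fun_prop) _
        _ ≤ ENNReal.ofReal (Real.exp (C * p ^ β)) := hp₀ p hpp₀
    have hap : 0 < a ^ p := Real.rpow_pos_of_pos ha p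
    have hμAn : μ (A n) ≤ ENNReal.ofReal (Real.exp (C * p ^ β - Real.log a * p)) := by
      have hdiv : μ (A n) ≤ ENNReal.ofReal (Real.exp (C * p ^ β)) / ENNReal.ofReal (a ^ p) := by
        rw [ENNReal.le_div_iff_mul_le (Or.inl (ENNReal.ofReal_pos.2 hap).ne')
          (Or.inl ENNReal.ofReal_ne_top), mul_comm]
        exact hmarkov
      refine le_trans hdiv (le_of_eq ?_)
      rw [← ENNReal.ofReal_div_of_pos hap]
      congr 1
      rw [Real.rpow_def_of_pos ha, ← Real.exp_sub]
    refine le_trans hμAn (ENNReal.ofReal_le_ofReal (Real.exp_le_exp.2 ?_))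
    -- exponent bound
    have hpβ : p ^ β = c ^ β * (n : ℝ) ^ α := by
      rw [hpdef, Real.mul_rpow hc.le (by positivity), ← Real.rpow_mul hnpos.le, hαβ]
    have hnα : (0:ℝ) ≤ (n : ℝ) ^ α := by positivity
    have hCp : C * p ^ β ≤ c / 4 * (n : ℝ) ^ α := by
      rw [hpβ, ← mul_assoc]
      exact mul_le_mul_of_nonneg_right hkey hnα
    have hnn : (n : ℝ) ^ (α - 1) * (n : ℝ) = (n : ℝ) ^ α := by
      nth_rewrite 2 [← Real.rpow_one (n:ℝ)]
      rw [← Real.rpow_add hnpos]; ring_nf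
    have hlogp : c / 2 * (n : ℝ) ^ α ≤ Real.log a * p := by
      have hp1 : (0:ℝ) ≤ (n : ℝ) ^ (α - 1) := by positivity
      calc c / 2 * (n : ℝ) ^ α = (n : ℝ) / 2 * (c * (n : ℝ) ^ (α - 1)) := by
            rw [← hnn]; ring
      _ ≤ Real.log a * (c * (n : ℝ) ^ (α - 1)) :=
            mul_le_mul_of_nonneg_right hloga (by positivity)
      _ = Real.log a * p := by rw [hpdef]
    linarith
  -- conclude
  refine ⟨t⁻¹, inv_pos.2 ht, ?_⟩
  have hone : (1 : ℝ) / t⁻¹ = t := by rw [one_div, inv_inv]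
  simp only [hone]
  have hsplit : ∫⁻ ω, ENNReal.ofReal (Real.exp (t * L ω ^ α)) ∂μ
      = ∑' n, ∫⁻ ω in A n, ENNReal.ofReal (Real.exp (t * L ω ^ α)) ∂μ := by
    rw [← setLIntegral_univ, ← hcover, lintegral_iUnion hAm hdisj]
  have hterm : ∀ n : ℕ, ∫⁻ ω in A n, ENNReal.ofReal (Real.exp (t * L ω ^ α)) ∂μ
      ≤ ENNReal.ofReal (Real.exp (t * ((n : ℝ) + 1) ^ α)) * μ (A n) := by
    intro n
    calc ∫⁻ ω in A n, ENNReal.ofReal (Real.exp (t * L ω ^ α)) ∂μ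
        ≤ ∫⁻ _ω in A n, ENNReal.ofReal (Real.exp (t * ((n : ℝ) + 1) ^ α)) ∂μ := by
          apply setLIntegral_mono measurable_const
          intro ω hω
          simp only [hAdef, Set.mem_preimage, Set.mem_Ico] at hω
          have hLn : L ω ^ α ≤ ((n : ℝ) + 1) ^ α :=
            Real.rpow_le_rpow (hL0 ω) hω.2.le hα0.le
          exact ENNReal.ofReal_le_ofReal
            (Real.exp_le_exp.2 (mul_le_mul_of_nonneg_left hLn ht.le))
      _ = ENNReal.ofReal (Real.exp (t * ((n : ℝ) + 1) ^ α)) * μ (A n) :=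
          setLIntegral_const _ _
  set r : ENNReal := ENNReal.ofReal (Real.exp (-(c / 8))) with hrdef
  have hr1 : r < 1 := by
    rw [hrdef]
    have : Real.exp (-(c / 8)) < 1 := Real.exp_lt_one_iff.2 (by linarith)
    calc ENNReal.ofReal (Real.exp (-(c / 8))) < ENNReal.ofReal 1 :=
        ENNReal.ofReal_lt_ofReal_iff one_pos |>.2 this
    _ = 1 := ENNReal.ofReal_one
  have htail : ∀ n : ℕ, N ≤ n → ∫⁻ ω in A n, ENNReal.ofReal (Real.exp (t * L ω ^ α)) ∂μ
      ≤ r ^ n := by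
    intro n hn
    have hn2 : 2 ≤ n := le_trans hN2 hn
    have hn1 : (1:ℝ) ≤ (n : ℝ) := by exact_mod_cast le_trans one_le_two hn2
    have hnpos : (0:ℝ) < n := lt_of_lt_of_le one_pos hn1
    have hexp1 : t * ((n : ℝ) + 1) ^ α ≤ c / 8 * (n : ℝ) ^ α := by
      have h1 : ((n : ℝ) + 1) ^ α ≤ (2 * (n : ℝ)) ^ α :=
        Real.rpow_le_rpow (by positivity) (by linarith) hα0.le
      have h2 : (2 * (n : ℝ)) ^ α = 2 ^ α * (n : ℝ) ^ α :=
        Real.mul_rpow (by norm_num) hnpos.le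
      calc t * ((n : ℝ) + 1) ^ α ≤ t * (2 ^ α * (n : ℝ) ^ α) := by
            rw [← h2]; exact mul_le_mul_of_nonneg_left h1 ht.le
      _ = c / 8 * (n : ℝ) ^ α := by rw [htdef]; field_simp
    have hnα_ge : (n : ℝ) ≤ (n : ℝ) ^ α := by
      nth_rewrite 1 [← Real.rpow_one (n:ℝ)]
      exact Real.rpow_le_rpow_of_exponent_le hn1 hα.le
    have hexp2 : t * ((n : ℝ) + 1) ^ α + -(c / 4) * (n : ℝ) ^ α ≤ -(c / 8) * (n : ℝ) := by
      have : t * ((n : ℝ) + 1) ^ α + -(c / 4) * (n : ℝ) ^ α ≤ -(c / 8) * (n : ℝ) ^ α := by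
        linarith
      refine le_trans this ?_
      have hc8 : (0:ℝ) < c / 8 := by positivity
      nlinarith
    calc ∫⁻ ω in A n, ENNReal.ofReal (Real.exp (t * L ω ^ α)) ∂μ
        ≤ ENNReal.ofReal (Real.exp (t * ((n : ℝ) + 1) ^ α)) * μ (A n) := hterm n
      _ ≤ ENNReal.ofReal (Real.exp (t * ((n : ℝ) + 1) ^ α))
            * ENNReal.ofReal (Real.exp (-(c / 4) * (n : ℝ) ^ α)) :=
          mul_le_mul_right (hmeas_bound n hn) _
      _ = ENNReal.ofReal (Real.exp (t * ((n : ℝ) + 1) ^ α + -(c / 4) * (n : ℝ) ^ α)) := by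
          rw [Real.exp_add, ENNReal.ofReal_mul (Real.exp_nonneg _)]
      _ ≤ ENNReal.ofReal (Real.exp (-(c / 8) * (n : ℝ))) :=
          ENNReal.ofReal_le_ofReal (Real.exp_le_exp.2 hexp2)
      _ = r ^ n := by
          rw [hrdef, ← ENNReal.ofReal_pow (Real.exp_nonneg _), ← Real.exp_nat_mul]
          congr 1
          ring
  rw [hsplit, ← Summable.sum_add_tsum_nat_add' (f := fun n =>
    ∫⁻ ω in A n, ENNReal.ofReal (Real.exp (t * L ω ^ α)) ∂μ) (k := N) ENNReal.summable]
  apply ENNReal.add_lt_top.2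
  constructor
  · apply lt_of_le_of_lt (Finset.sum_le_sum fun n _ => hterm n)
    apply lt_of_le_of_lt (Finset.sum_le_sum fun n _ =>
      mul_le_mul_right (show μ (A n) ≤ 1 from prob_le_one) _)
    simp only [mul_one]
    apply lt_of_le_of_lt (le_refl _)
    exact ENNReal.sum_lt_top.2 fun n _ => ENNReal.ofReal_lt_top
  · apply lt_of_le_of_lt (ENNReal.tsum_le_tsum fun i => htail (i + N) (Nat.le_add_left N i))
    apply lt_of_le_of_lt (ENNReal.tsum_le_tsum fun i =>
      pow_le_pow_right_of_le_one' hr1.le (Nat.le_add_right i N))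
    rw [ENNReal.tsum_geometric]
    exact ENNReal.inv_lt_top.2 (tsub_pos_of_lt hr1)
end

section
/- Let r̃(x,ε) := inf{ r ≥ 1 : ∀ρ ≥ r, ⨍_{B_ρ(x)} |f − m| ≤ ε m } for a fixed nonnegative locally integrable f: ℝ^d → ℝ and constant m > 0, and let r̲(x,ε) := inf_y (r̃(y,ε) + |x−y|/8). Then r̃(x, 9^d ε) ≤ r̲(x, ε) ≤ r̃(x, ε) for all x and ε > 0. -/
open MeasureTheory Metric

/-- with `r̃(x,δ) = inf{r ≥ 1 : ∀ρ ≥ r, ⨍_{B_ρ(x)} |f-m| ≤ δ m}` and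
`r̲(x,δ) = inf_y (r̃(y,δ) + |x-y|/8)` (the maximal (1/8)-Lipschitz minorant), one has
`r̃(x, 9^d δ) ≤ r̲(x,δ) ≤ r̃(x,δ)`. -/
theorem lipschitz_minorant_of_minimal_scale
    (d : ℕ) (f : EuclideanSpace ℝ (Fin d) → ℝ) (hf : LocallyIntegrable f volume)
    (m : ℝ) (hm : 0 < m)
    (rt : EuclideanSpace ℝ (Fin d) → ℝ → ℝ)
    (hrt : ∀ x δ, rt x δ =
      sInf {r : ℝ | 1 ≤ r ∧ ∀ ρ : ℝ, r ≤ ρ →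
        (volume (ball x ρ)).toReal⁻¹ * (∫ z in ball x ρ, |f z - m|) ≤ δ * m})
    (hne : ∀ (x : EuclideanSpace ℝ (Fin d)) (δ : ℝ), 0 < δ →
      {r : ℝ | 1 ≤ r ∧ ∀ ρ : ℝ, r ≤ ρ →
        (volume (ball x ρ)).toReal⁻¹ * (∫ z in ball x ρ, |f z - m|) ≤ δ * m}.Nonempty)
    (ε : ℝ) (hε : 0 < ε) :
    ∀ x, rt x ((9 : ℝ) ^ d * ε) ≤ (⨅ y, (rt y ε + ‖x - y‖ / 8)) ∧
      (⨅ y, (rt y ε + ‖x - y‖ / 8)) ≤ rt x ε := by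
  intro x
  set S : EuclideanSpace ℝ (Fin d) → ℝ → Set ℝ := fun x δ =>
    {r : ℝ | 1 ≤ r ∧ ∀ ρ : ℝ, r ≤ ρ →
      (volume (ball x ρ)).toReal⁻¹ * (∫ z in ball x ρ, |f z - m|) ≤ δ * m} with hS
  have hbdd : ∀ y δ, BddBelow (S y δ) := fun y δ => ⟨1, fun r hr => hr.1⟩
  have hone : ∀ y, (1 : ℝ) ≤ rt y ε := by
    intro y
    rw [hrt y ε]
    exact le_csInf (hne y ε hε) (fun r hr => hr.1)
  -- key pointwise estimate
  have key : ∀ y : EuclideanSpace ℝ (Fin d),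
      rt x ((9 : ℝ) ^ d * ε) ≤ rt y ε + ‖x - y‖ / 8 := by
    intro y
    have hK : ∀ r ∈ S y ε, rt x ((9 : ℝ) ^ d * ε) ≤ r + ‖x - y‖ / 8 := by
      rintro r ⟨hr1, hr⟩
      have hmem : max r (‖x - y‖ / 8) ∈ S x ((9 : ℝ) ^ d * ε) := by
        constructor
        · exact le_max_of_le_left hr1
        · intro ρ hρ
          have hρr : r ≤ ρ := le_trans (le_max_left _ _) hρ
          have hρpos : (0 : ℝ) < ρ := lt_of_lt_of_le (lt_of_lt_of_le one_pos hr1) hρr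
          have hxy : ‖x - y‖ ≤ 8 * ρ := by
            have := le_trans (le_max_right r (‖x - y‖ / 8)) hρ
            linarith
          -- ball inclusion
          have hsub : ball x ρ ⊆ ball y (9 * ρ) := by
            intro z hz
            rw [mem_ball] at hz ⊢
            have : dist z y ≤ dist z x + dist x y := dist_triangle z x y
            have hdxy : dist x y = ‖x - y‖ := by rw [dist_eq_norm]
            linarith
          -- volumes
          have hVy : volume (ball y (9 * ρ)) =
              ENNReal.ofReal ((9 : ℝ) ^ d) * volume (ball (0 : EuclideanSpace ℝ (Fin d)) ρ) := by
            rw [Measure.addHaar_ball_mul_of_pos volume y (by norm_num : (0:ℝ) < 9) ρ,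
              finrank_euclideanSpace_fin]
          have hVx : volume (ball x ρ) = volume (ball (0 : EuclideanSpace ℝ (Fin d)) ρ) :=
            Measure.addHaar_ball_center volume x ρ
          have hV0pos : 0 < (volume (ball (0 : EuclideanSpace ℝ (Fin d)) ρ)).toReal := by
            refine ENNReal.toReal_pos (measure_ball_pos volume 0 hρpos).ne' measure_ball_lt_top.ne
          have hVyR : (volume (ball y (9 * ρ))).toReal =
              (9 : ℝ) ^ d * (volume (ball (0 : EuclideanSpace ℝ (Fin d)) ρ)).toReal := by
            rw [hVy, ENNReal.toReal_mul, ENNReal.toReal_ofReal (by positivity)]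
          -- integrability on the big ball
          have hint : IntegrableOn (fun z => |f z - m|) (ball y (9 * ρ)) volume := by
            have h1 : IntegrableOn f (ball y (9 * ρ)) volume :=
              (hf.integrableOn_isCompact (isCompact_closedBall y (9 * ρ))).mono_set
                ball_subset_closedBall
            exact (h1.sub (integrableOn_const measure_ball_lt_top.ne)).abs
          have hIle : (∫ z in ball x ρ, |f z - m|) ≤ ∫ z in ball y (9 * ρ), |f z - m| := by
            refine setIntegral_mono_set hint ?_ (HasSubset.Subset.eventuallyLE hsub)
            exact Filter.Eventually.of_forall (fun z => abs_nonneg _)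
          have havg : (volume (ball y (9 * ρ))).toReal⁻¹ *
              (∫ z in ball y (9 * ρ), |f z - m|) ≤ ε * m := by
            refine hr (9 * ρ) ?_
            nlinarith
          have hInn : 0 ≤ ∫ z in ball y (9 * ρ), |f z - m| :=
            setIntegral_nonneg measurableSet_ball (fun z _ => abs_nonneg _)
          calc (volume (ball x ρ)).toReal⁻¹ * (∫ z in ball x ρ, |f z - m|)
              ≤ (volume (ball x ρ)).toReal⁻¹ * (∫ z in ball y (9 * ρ), |f z - m|) := by
                apply mul_le_mul_of_nonneg_left hIle
                positivity
            _ = (9 : ℝ) ^ d * ((volume (ball y (9 * ρ))).toReal⁻¹ *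
                (∫ z in ball y (9 * ρ), |f z - m|)) := by
                rw [hVyR, hVx]
                field_simp
            _ ≤ (9 : ℝ) ^ d * (ε * m) := by
                apply mul_le_mul_of_nonneg_left havg
                positivity
            _ = (9 : ℝ) ^ d * ε * m := by ring
      have h1 : rt x ((9 : ℝ) ^ d * ε) ≤ max r (‖x - y‖ / 8) := by
        rw [hrt]
        exact csInf_le (hbdd x _) hmem
      have h2 : max r (‖x - y‖ / 8) ≤ r + ‖x - y‖ / 8 := by
        apply max_le
        · have : (0:ℝ) ≤ ‖x - y‖ / 8 := by positivity
          linarith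
        · linarith
      linarith
    have : rt x ((9 : ℝ) ^ d * ε) - ‖x - y‖ / 8 ≤ rt y ε := by
      rw [hrt y ε]
      exact le_csInf (hne y ε hε) (fun r hr => by linarith [hK r hr])
    linarith
  constructor
  · exact le_ciInf key
  · have hb : BddBelow (Set.range fun y => rt y ε + ‖x - y‖ / 8) := by
      refine ⟨1, ?_⟩
      rintro _ ⟨y, rfl⟩
      have : (0:ℝ) ≤ ‖x - y‖ / 8 := by positivity
      linarith [hone y]
    have := ciInf_le hb x
    simpa using this
end
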